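/- Let H : ℝⁿ × ℝⁿ → ℝ be continuously differentiable, let F : ℝⁿ × ℝⁿ → ℝⁿ be continuous (the components of a semibasic force 1-form F = Fᵢ dqⁱ), and let γ : ℝⁿ → ℝⁿ be continuously differentiable with symmetric Jacobian at every point. Suppose the forced Hamilton–Jacobi equation holds: for every q ∈ ℝⁿ and every i, ∂/∂qⁱ [H(q, γ(q))] = −Fᵢ(q, γ(q)). Then for every differentiable curve σ : I → ℝⁿ on an open interval satisfying σ'(t) = ∂H/∂p(σ(t), γ(σ(t))) for all t ∈ I, the lifted curve t ↦ (σ(t), γ(σ(t))) satisfies the forced Hamilton equations: d/dt σᵢ(t) = ∂H/∂pᵢ(σ(t), γ(σ(t))) and d/dt γᵢ(σ(t)) = −∂H/∂qⁱ(σ(t), γ(σ(t))) − Fᵢ(σ(t), γ(σ(t))). -/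

import Mathlib

/-- Partial derivative of `H` with respect to `qⁱ` at a point of phase space `ℝⁿ × ℝⁿ`. -/
noncomputable def partialQ {n : ℕ} (H : (Fin n → ℝ) × (Fin n → ℝ) → ℝ)
    (x : (Fin n → ℝ) × (Fin n → ℝ)) (i : Fin n) : ℝ :=
  fderiv ℝ H x (Pi.single i 1, 0)

/-- Partial derivative of `H` with respect to `pᵢ` at a point of phase space `ℝⁿ × ℝⁿ`. -/
noncomputable def partialP {n : ℕ} (H : (Fin n → ℝ) × (Fin n → ℝ) → ℝ)
    (x : (Fin n → ℝ) × (Fin n → ℝ)) (i : Fin n) : ℝ :=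
  fderiv ℝ H x (0, Pi.single i 1)

private theorem eval_sum {n : ℕ} (L : (Fin n → ℝ) →L[ℝ] ℝ) (v : Fin n → ℝ) :
    L v = ∑ j, v j * L (Pi.single j 1) := by
  have hv : v = ∑ j, v j • (Pi.single j 1 : Fin n → ℝ) := by
    ext k; simp [Pi.single_apply, Finset.sum_apply, eq_comm]
  conv_lhs => rw [hv]
  rw [map_sum]
  simp [smul_eq_mul]

private theorem pair_split {n : ℕ} (L : ((Fin n → ℝ) × (Fin n → ℝ)) →L[ℝ] ℝ)
    (v w : Fin n → ℝ) :
    L (v, w) = L (v, 0) + ∑ j, w j * L (0, Pi.single j 1) := by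
  have h : (v, w) = (v, (0 : Fin n → ℝ)) + ((0 : Fin n → ℝ), w) := by simp
  rw [h, map_add]
  congr 1
  have := eval_sum (L.comp (ContinuousLinearMap.inr ℝ (Fin n → ℝ) (Fin n → ℝ))) w
  simpa using this

theorem forced_hamilton_jacobi_lifts_integral_curves {n : ℕ}
    (H : (Fin n → ℝ) × (Fin n → ℝ) → ℝ) (hH : ContDiff ℝ 1 H)
    (F : (Fin n → ℝ) × (Fin n → ℝ) → (Fin n → ℝ)) (hF : Continuous F)
    (γ : (Fin n → ℝ) → (Fin n → ℝ)) (hγ : ContDiff ℝ 1 γ)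
    (hsym : ∀ (q : Fin n → ℝ) (i j : Fin n),
      fderiv ℝ γ q (Pi.single j 1) i = fderiv ℝ γ q (Pi.single i 1) j)
    (hHJ : ∀ (q : Fin n → ℝ) (i : Fin n),
      fderiv ℝ (fun q => H (q, γ q)) q (Pi.single i 1) = -(F (q, γ q) i))
    (t₀ t_f : ℝ) (σ : ℝ → (Fin n → ℝ))
    (hσ : ∀ t ∈ Set.Ioo t₀ t_f,
      HasDerivAt σ (fun i => partialP H (σ t, γ (σ t)) i) t) :
    ∀ t ∈ Set.Ioo t₀ t_f, ∀ i : Fin n,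
      HasDerivAt (fun s => σ s i) (partialP H (σ t, γ (σ t)) i) t ∧
      HasDerivAt (fun s => γ (σ s) i)
        (-(partialQ H (σ t, γ (σ t)) i) - F (σ t, γ (σ t)) i) t := by
  intro t ht i
  have hσt := hσ t ht
  set x : (Fin n → ℝ) × (Fin n → ℝ) := (σ t, γ (σ t)) with hx
  set v' : Fin n → ℝ := fun i => partialP H x i with hv'
  have hdγ : ∀ q, DifferentiableAt ℝ γ q := fun q => (hγ.differentiable one_ne_zero q)
  refine ⟨hasDerivAt_pi.mp hσt i, ?_⟩
  -- derivative of the lifted momentum component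
  have hcomp : HasDerivAt (fun s => γ (σ s)) (fderiv ℝ γ (σ t) v') t :=
    ((hdγ (σ t)).hasFDerivAt).comp_hasDerivAt t hσt
  have hci := hasDerivAt_pi.mp hcomp i
  -- chain rule for the Hamilton–Jacobi composite
  set L : ((Fin n → ℝ) × (Fin n → ℝ)) →L[ℝ] ℝ := fderiv ℝ H x with hL
  set D : (Fin n → ℝ) →L[ℝ] (Fin n → ℝ) := fderiv ℝ γ (σ t) with hD
  have hchain : fderiv ℝ (fun q => H (q, γ q)) (σ t) =
      L.comp ((ContinuousLinearMap.id ℝ (Fin n → ℝ)).prod D) := by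
    apply HasFDerivAt.fderiv
    exact ((hH.differentiable one_ne_zero x).hasFDerivAt).comp (σ t)
      (HasFDerivAt.prodMk (hasFDerivAt_id (σ t)) (hdγ (σ t)).hasFDerivAt)
  have hHJi := hHJ (σ t) i
  rw [hchain] at hHJi
  simp only [ContinuousLinearMap.comp_apply, ContinuousLinearMap.prod_apply,
    ContinuousLinearMap.id_apply] at hHJi
  -- hHJi : L (e_i, D e_i) = -(F x i)
  rw [pair_split] at hHJi
  -- compute the value of the derivative
  have hval : D v' i = -(partialQ H x i) - F x i := by
    have h1 : D v' i = ∑ j, v' j * D (Pi.single j 1) i := by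
      have := eval_sum ((ContinuousLinearMap.proj i).comp D) v'
      simpa using this
    have h2 : ∑ j, v' j * D (Pi.single j 1) i
        = ∑ j, D (Pi.single i 1) j * L (0, Pi.single j 1) := by
      refine Finset.sum_congr rfl fun j _ => ?_
      rw [hsym (σ t) j i]
      simp only [hv', partialP]
      ring
    have h3 : L (Pi.single i 1, 0) = partialQ H x i := rfl
    rw [h1, h2]
    rw [h3] at hHJi
    linarith
  rw [hval] at hci
  exact hci
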